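/- Let < be an irreflexive transitive relation on a set A, let P ⊆ A be an infinite chain (any two distinct elements of P are comparable), and let Q ⊆ A be an antichain (any two distinct elements of Q are incomparable). Suppose that every element p ∈ P has an incomparable element in Q (some q ∈ Q with neither p < q nor q < p), and that every element q ∈ Q satisfies q < p for some p ∈ P. Then Q is infinite. -/
import Mathlib

lemma finset_chain_max {A : Type*} (lt : A → A → Prop)
    (hirr : ∀ x, ¬ lt x x) (htrans : ∀ x y z, lt x y → lt y z → lt x z)
    (s : Finset A) (hne : s.Nonempty)
    (hchain : ∀ x ∈ s, ∀ y ∈ s, x ≠ y → lt x y ∨ lt y x) :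
    ∃ m ∈ s, ∀ x ∈ s, ¬ lt m x := by
  classical
  induction s using Finset.induction with
  | empty => exact absurd hne (by simp)
  | @insert a s ha ih =>
    rcases s.eq_empty_or_nonempty with rfl | hs
    · exact ⟨a, by simp, by simpa using hirr a⟩
    · obtain ⟨m, hm, hmax⟩ := ih hs (fun x hx y hy hxy =>
        hchain x (Finset.mem_insert_of_mem hx) y (Finset.mem_insert_of_mem hy) hxy)
      have hne' : a ≠ m := fun h => ha (h ▸ hm)
      rcases hchain a (Finset.mem_insert_self a s) m (Finset.mem_insert_of_mem hm) hne' with ham | hma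
      · refine ⟨m, Finset.mem_insert_of_mem hm, ?_⟩
        intro x hx
        rcases Finset.mem_insert.mp hx with rfl | hx
        · exact fun h => hirr m (htrans _ _ _ h ham)
        · exact hmax x hx
      · refine ⟨a, Finset.mem_insert_self a s, ?_⟩
        intro x hx
        rcases Finset.mem_insert.mp hx with rfl | hx
        · exact hirr x
        · exact fun h => hmax x hx (htrans _ _ _ hma h)

/-- If `<` is a strict partial order, `P` is an infinite chain,
`Q` an antichain, every element of `P` is incomparable with some element of `Q`,
and every element of `Q` lies below some element of `P`, then `Q` is infinite. -/
theorem antichain_infinite {A : Type*} (lt : A → A → Prop)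
    (hirr : ∀ x, ¬ lt x x) (htrans : ∀ x y z, lt x y → lt y z → lt x z)
    (P Q : Set A) (hPinf : P.Infinite)
    (hPchain : ∀ p ∈ P, ∀ p' ∈ P, p ≠ p' → lt p p' ∨ lt p' p)
    (hQanti : ∀ q ∈ Q, ∀ q' ∈ Q, q ≠ q' → ¬ lt q q' ∧ ¬ lt q' q)
    (hPwit : ∀ p ∈ P, ∃ q ∈ Q, ¬ lt p q ∧ ¬ lt q p)
    (hQwit : ∀ q ∈ Q, ∃ p ∈ P, lt q p) :
    Q.Infinite := by
  classical
  by_contra hQinf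
  rw [Set.not_infinite] at hQinf
  obtain ⟨p0, hp0⟩ := hPinf.nonempty
  obtain ⟨q0, hq0, _⟩ := hPwit p0 hp0
  -- choose a witness above each element of Q
  set f : A → A := fun q => if h : q ∈ Q then (hQwit q h).choose else q with hf
  have hfspec : ∀ q ∈ Q, f q ∈ P ∧ lt q (f q) := by
    intro q hq
    simp only [hf, dif_pos hq]
    exact ⟨(hQwit q hq).choose_spec.1, (hQwit q hq).choose_spec.2⟩
  set T : Finset A := hQinf.toFinset.image f with hT
  have hTP : ∀ x ∈ T, x ∈ P := by
    intro x hx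
    simp only [hT, Finset.mem_image, Set.Finite.mem_toFinset] at hx
    obtain ⟨q, hq, rfl⟩ := hx
    exact (hfspec q hq).1
  have hTne : T.Nonempty := ⟨f q0, by
    simp only [hT, Finset.mem_image, Set.Finite.mem_toFinset]
    exact ⟨q0, hq0, rfl⟩⟩
  obtain ⟨m, hmT, hmax⟩ := finset_chain_max lt hirr htrans T hTne
    (fun x hx y hy hxy => hPchain x (hTP x hx) y (hTP y hy) hxy)
  have hmP : m ∈ P := hTP m hmT
  -- every q ∈ Q satisfies lt q m
  have hall : ∀ q ∈ Q, lt q m := by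
    intro q hq
    have hfq : f q ∈ T := by
      simp only [hT, Finset.mem_image, Set.Finite.mem_toFinset]
      exact ⟨q, hq, rfl⟩
    have hlt := (hfspec q hq).2
    by_cases heq : f q = m
    · exact heq ▸ hlt
    · rcases hPchain (f q) ((hfspec q hq).1) m hmP heq with h | h
      · exact htrans _ _ _ hlt h
      · exact absurd h (hmax _ hfq)
  obtain ⟨q, hq, _, hqm⟩ := hPwit m hmP
  exact hqm (hall q hq)
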